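/- The set RO(G, <) of reduction operators relative to a well-ordered set (G, <), ordered by T₁ ⪯ T₂ iff ker(T₂) ⊆ ker(T₁), is a lattice, with meet T₁ ∧ T₂ = ker⁻¹(ker(T₁) + ker(T₂)) and join T₁ ∨ T₂ = ker⁻¹(ker(T₁) ∩ ker(T₂)), where ker⁻¹ is the inverse of the kernel bijection between RO(G, <) and subspaces of K⟨G⟩. -/

import Mathlib

/-- A reduction operator relative to a well-ordered set `(G, <)`: an idempotent
`K`-linear endomorphism `T` of `G →₀ K` such that `T g ≤ g` for every generator `g`. -/
def IsReductionOperator {K G : Type*} [Field K] [LinearOrder G]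
    (T : (G →₀ K) →ₗ[K] (G →₀ K)) : Prop :=
  T ∘ₗ T = T ∧ ∀ g : G,
    T (Finsupp.single g 1) = Finsupp.single g 1 ∨
      ∀ h ∈ (T (Finsupp.single g 1)).support, h < g

section Aux

set_option linter.unusedSectionVars false
set_option linter.unusedVariables false

variable {K G : Type*} [Field K] [LinearOrder G] [WellFoundedLT G]

/-- The set of "leading monomials" of a subspace `V`. -/
def Lset (V : Submodule K (G →₀ K)) : Set G :=
  {g | ∃ v ∈ V, g ∈ v.support ∧ ∀ h ∈ v.support, h ≤ g}

lemma disjoint_aux (V : Submodule K (G →₀ K)) :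
    Disjoint V (Finsupp.supported K K (Lset V)ᶜ) := by
  rw [Submodule.disjoint_def]
  intro v hvV hvW
  by_contra hne
  have hsupp : v.support.Nonempty := Finsupp.support_nonempty_iff.mpr hne
  set m := v.support.max' hsupp with hm
  have hmL : m ∈ Lset V := ⟨v, hvV, v.support.max'_mem hsupp, fun h hh => Finset.le_max' _ _ hh⟩
  have := (Finsupp.mem_supported K v).mp hvW (v.support.max'_mem hsupp)
  exact this hmL

lemma mem_sup_aux (V : Submodule K (G →₀ K)) :
    ∀ g : G, ∀ f : G →₀ K, (∀ h ∈ f.support, h ≤ g) →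
      f ∈ V ⊔ Finsupp.supported K K (Lset V)ᶜ := by
  intro g
  induction g using WellFoundedLT.induction with
  | _ g IH =>
    have IH' : ∀ f : G →₀ K, (∀ h ∈ f.support, h < g) →
        f ∈ V ⊔ Finsupp.supported K K (Lset V)ᶜ := by
      intro f hf
      rcases eq_or_ne f 0 with rfl | hne
      · exact zero_mem _
      · have hsupp : f.support.Nonempty := Finsupp.support_nonempty_iff.mpr hne
        exact IH (f.support.max' hsupp) (hf _ (f.support.max'_mem hsupp))
          f (fun h hh => Finset.le_max' _ _ hh)
    intro f hf
    by_cases hg : g ∈ Lset V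
    · obtain ⟨v, hvV, hgv, hvle⟩ := hg
      have hvg : v g ≠ 0 := Finsupp.mem_support_iff.mp hgv
      have h1 : f - (f g / v g) • v ∈ V ⊔ Finsupp.supported K K (Lset V)ᶜ := by
        apply IH'
        intro h hh
        rw [Finsupp.mem_support_iff, Finsupp.sub_apply, Finsupp.smul_apply, smul_eq_mul] at hh
        have hne : h ≠ g := by
          rintro rfl
          apply hh
          field_simp
          simp
        rcases eq_or_ne (f h) 0 with hf0 | hf0
        · have hv0 : v h ≠ 0 := by
            intro hv0
            apply hh; rw [hf0, hv0, mul_zero, sub_zero]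
          exact lt_of_le_of_ne (hvle h (Finsupp.mem_support_iff.mpr hv0)) hne
        · exact lt_of_le_of_ne (hf h (Finsupp.mem_support_iff.mpr hf0)) hne
      have : f = (f - (f g / v g) • v) + (f g / v g) • v := by abel
      rw [this]
      exact add_mem h1 (Submodule.mem_sup_left (Submodule.smul_mem _ _ hvV))
    · have h1 : f - Finsupp.single g (f g) ∈ V ⊔ Finsupp.supported K K (Lset V)ᶜ := by
        apply IH'
        intro h hh
        rw [Finsupp.mem_support_iff, Finsupp.sub_apply] at hh
        have hne : h ≠ g := by
          rintro rfl
          apply hh; simp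
        have : f h ≠ 0 := by
          intro hf0
          apply hh
          rw [hf0, Finsupp.single_apply, if_neg (Ne.symm hne), sub_zero]
        exact lt_of_le_of_ne (hf h (Finsupp.mem_support_iff.mpr this)) hne
      have h2 : Finsupp.single g (f g) ∈ Finsupp.supported K K (Lset V)ᶜ := by
        rw [Finsupp.mem_supported]
        intro h hh
        have : h = g := by
          have := Finsupp.support_single_subset (a := g) (b := f g) hh
          simpa using this
        subst this
        exact hg
      have : f = (f - Finsupp.single g (f g)) + Finsupp.single g (f g) := by abel
      rw [this]
      exact add_mem h1 (Submodule.mem_sup_right h2)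

lemma isCompl_aux (V : Submodule K (G →₀ K)) :
    IsCompl V (Finsupp.supported K K (Lset V)ᶜ) := by
  constructor
  · exact disjoint_aux V
  · rw [codisjoint_iff_le_sup]
    intro f _
    rcases eq_or_ne f 0 with rfl | hne
    · exact zero_mem _
    · have hsupp : f.support.Nonempty := Finsupp.support_nonempty_iff.mpr hne
      exact mem_sup_aux V (f.support.max' hsupp) f (fun h hh => Finset.le_max' _ _ hh)

/-- The inverse kernel map: every subspace is the kernel of a reduction operator. -/
lemma exists_reduction_operator (V : Submodule K (G →₀ K)) :
    ∃ T : (G →₀ K) →ₗ[K] (G →₀ K), IsReductionOperator T ∧ LinearMap.ker T = V := by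
  set W := Finsupp.supported K K (Lset V)ᶜ with hW
  have hc : IsCompl W V := (isCompl_aux V).symm
  set p := Submodule.projectionOnto W V hc with hp
  refine ⟨W.subtype ∘ₗ p, ⟨?_, ?_⟩, ?_⟩
  · refine LinearMap.ext fun x => ?_
    simp only [LinearMap.comp_apply, Submodule.coe_subtype]
    rw [Submodule.linearProjOfIsCompl_apply_left hc (p x)]
  · intro g
    by_cases hg : g ∈ Lset V
    · right
      intro h hh
      set u : G →₀ K := W.subtype (p (Finsupp.single g 1)) with hu
      have huW : u ∈ W := (p (Finsupp.single g 1)).2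
      have huS : ↑u.support ⊆ (Lset V)ᶜ := (Finsupp.mem_supported K u).mp huW
      set x : G →₀ K := Finsupp.single g 1 - u with hx
      have hxV : x ∈ V := by
        rw [← Submodule.linearProjOfIsCompl_apply_eq_zero_iff (q := V) hc] at *
        · rw [hx, map_sub, hu]
          simp only [Submodule.coe_subtype]
          rw [Submodule.linearProjOfIsCompl_apply_left hc (p (Finsupp.single g 1))]
          exact sub_self _
      have hxne : x ≠ 0 := by
        intro h0
        have : Finsupp.single g 1 = u := by
          have := sub_eq_zero.mp h0; exact this
        have hgsup : g ∈ u.support := by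
          rw [← this]; simp
        exact (huS hgsup) hg
      -- the leading monomial of x is g
      have hxs : x.support.Nonempty := Finsupp.support_nonempty_iff.mpr hxne
      set m := x.support.max' hxs with hm
      have hmL : m ∈ Lset V := ⟨x, hxV, x.support.max'_mem hxs, fun h hh => Finset.le_max' _ _ hh⟩
      have hsupx : ∀ h' ∈ x.support, h' = g ∨ h' ∈ u.support := by
        intro h' hh'
        rw [Finsupp.mem_support_iff, hx, Finsupp.sub_apply] at hh'
        by_cases he : h' = g
        · exact Or.inl he
        · right
          rw [Finsupp.mem_support_iff]
          intro h0
          apply hh'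
          rw [h0, Finsupp.single_apply, if_neg (Ne.symm he), sub_zero]
      have hmg : m = g := by
        rcases hsupx m (x.support.max'_mem hxs) with h' | h'
        · exact h'
        · exact absurd hmL (huS h')
      -- now, h ∈ support u
      have hhu : h ∈ u.support := hh
      have hhg : h ≠ g := by
        intro he
        exact (huS hhu) (he ▸ hg)
      have hhx : h ∈ x.support := by
        rw [Finsupp.mem_support_iff, hx, Finsupp.sub_apply, Finsupp.single_apply,
          if_neg (Ne.symm hhg), zero_sub, neg_ne_zero]
        exact Finsupp.mem_support_iff.mp hhu
      have := Finset.le_max' _ _ hhx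
      rw [← hm, hmg] at this
      exact lt_of_le_of_ne this hhg
    · left
      have hs : Finsupp.single g (1 : K) ∈ W := by
        rw [hW, Finsupp.mem_supported]
        intro h hh
        have : h = g := by
          have := Finsupp.support_single_subset (a := g) (b := (1 : K)) hh
          simpa using this
        subst this; exact hg
      simp only [LinearMap.comp_apply, Submodule.coe_subtype]
      rw [show Finsupp.single g (1 : K) = ((⟨_, hs⟩ : W) : G →₀ K) from rfl,
        Submodule.linearProjOfIsCompl_apply_left hc]
  · rw [LinearMap.ker_comp, Submodule.ker_subtype, Submodule.comap_bot,
      Submodule.linearProjOfIsCompl_ker]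

end Aux

theorem stmt_6 {K G : Type*} [Field K] [LinearOrder G] [WellFoundedLT G]
    (T₁ T₂ : (G →₀ K) →ₗ[K] (G →₀ K))
    (h₁ : IsReductionOperator T₁) (h₂ : IsReductionOperator T₂) :
    ∃ M J : (G →₀ K) →ₗ[K] (G →₀ K),
      IsReductionOperator M ∧ IsReductionOperator J ∧
      LinearMap.ker M = LinearMap.ker T₁ ⊔ LinearMap.ker T₂ ∧
      LinearMap.ker J = LinearMap.ker T₁ ⊓ LinearMap.ker T₂ ∧
      -- M is a lower bound of T₁ and T₂ for ⪯
      LinearMap.ker T₁ ≤ LinearMap.ker M ∧ LinearMap.ker T₂ ≤ LinearMap.ker M ∧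
      -- M is the greatest lower bound
      (∀ C : (G →₀ K) →ₗ[K] (G →₀ K), IsReductionOperator C →
        LinearMap.ker T₁ ≤ LinearMap.ker C → LinearMap.ker T₂ ≤ LinearMap.ker C →
        LinearMap.ker M ≤ LinearMap.ker C) ∧
      -- J is an upper bound of T₁ and T₂ for ⪯
      LinearMap.ker J ≤ LinearMap.ker T₁ ∧ LinearMap.ker J ≤ LinearMap.ker T₂ ∧
      -- J is the least upper bound
      (∀ C : (G →₀ K) →ₗ[K] (G →₀ K), IsReductionOperator C →
        LinearMap.ker C ≤ LinearMap.ker T₁ → LinearMap.ker C ≤ LinearMap.ker T₂ →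
        LinearMap.ker C ≤ LinearMap.ker J) := by
  obtain ⟨M, hM, hMk⟩ := exists_reduction_operator (LinearMap.ker T₁ ⊔ LinearMap.ker T₂)
  obtain ⟨J, hJ, hJk⟩ := exists_reduction_operator (LinearMap.ker T₁ ⊓ LinearMap.ker T₂)
  refine ⟨M, J, hM, hJ, hMk, hJk, ?_, ?_, ?_, ?_, ?_, ?_⟩
  · rw [hMk]; exact le_sup_left
  · rw [hMk]; exact le_sup_right
  · intro C _ hC1 hC2; rw [hMk]; exact sup_le hC1 hC2
  · rw [hJk]; exact inf_le_left
  · rw [hJk]; exact inf_le_right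
  · intro C _ hC1 hC2; rw [hJk]; exact le_inf hC1 hC2
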